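/- Let u and v be nonnegative convex functions on [a,b] with a < b such that u² and v² are integrable on [a,b]. Then (1/(b-a)²) · (∫_a^b u²(x) dx) · (∫_a^b v²(x) dx) ≤ ((u(a)² + u(b)²)/2) · ((v(a)² + v(b)²)/2). -/

import Mathlib

open Set MeasureTheory intervalIntegral

lemma hadamard_sq (a b : ℝ) (hab : a < b) (f : ℝ → ℝ)
    (hf0 : ∀ x ∈ Set.Icc a b, 0 ≤ f x) (hf : ConvexOn ℝ (Set.Icc a b) f)
    (hint : IntervalIntegrable (fun x => f x ^ 2) MeasureTheory.volume a b) :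
    (∫ x in a..b, f x ^ 2) ≤ (b - a) * ((f a ^ 2 + f b ^ 2) / 2) := by
  have hba : (0:ℝ) < b - a := by linarith
  have key : ∀ x ∈ Set.Icc a b,
      f x ^ 2 ≤ ((b - x) * f a ^ 2 + (x - a) * f b ^ 2) / (b - a) := by
    intro x hx
    obtain ⟨hxa, hxb⟩ := hx
    set k : ℝ := (b - x) / (b - a) with hk
    have hk0 : 0 ≤ k := div_nonneg (by linarith) hba.le
    have hk1 : k ≤ 1 := by rw [div_le_one hba]; linarith
    have hks : k + (1 - k) = 1 := by ring
    have hxc : k * a + (1 - k) * b = x := by rw [hk]; field_simp; ring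
    have h1 : f x ≤ k * f a + (1 - k) * f b := by
      have := hf.2 (Set.left_mem_Icc.2 hab.le) (Set.right_mem_Icc.2 hab.le)
        hk0 (by linarith) hks
      simpa [hxc, smul_eq_mul] using this
    have hfa := hf0 a (Set.left_mem_Icc.2 hab.le)
    have hfb := hf0 b (Set.right_mem_Icc.2 hab.le)
    have hfx := hf0 x ⟨hxa, hxb⟩
    have h2 : f x ^ 2 ≤ (k * f a + (1 - k) * f b) ^ 2 :=
      pow_le_pow_left₀ hfx h1 2
    have h3 : (k * f a + (1 - k) * f b) ^ 2 ≤ k * f a ^ 2 + (1 - k) * f b ^ 2 := by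
      nlinarith [sq_nonneg (f a - f b), mul_nonneg hk0 (by linarith : (0:ℝ) ≤ 1 - k)]
    have : k * f a ^ 2 + (1 - k) * f b ^ 2
        = ((b - x) * f a ^ 2 + (x - a) * f b ^ 2) / (b - a) := by
      rw [hk]; field_simp; ring
    linarith
  have hgint : IntervalIntegrable
      (fun x => ((b - x) * f a ^ 2 + (x - a) * f b ^ 2) / (b - a))
      MeasureTheory.volume a b :=
    (Continuous.intervalIntegrable (by continuity) a b)
  have hmono := intervalIntegral.integral_mono_on hab.le hint hgint
    (fun x hx => key x hx)
  calc (∫ x in a..b, f x ^ 2)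
      ≤ ∫ x in a..b, ((b - x) * f a ^ 2 + (x - a) * f b ^ 2) / (b - a) := hmono
    _ = (b - a) * ((f a ^ 2 + f b ^ 2) / 2) := by
        have : (fun x => ((b - x) * f a ^ 2 + (x - a) * f b ^ 2) / (b - a))
            = fun x => (b * f a ^ 2 - a * f b ^ 2) / (b - a)
              + ((f b ^ 2 - f a ^ 2) / (b - a)) * x := by
          funext x; field_simp; ring
        rw [this]
        rw [intervalIntegral.integral_add intervalIntegrable_const
          ((continuous_const.mul continuous_id).intervalIntegrable a b)
          (g := fun x : ℝ => (f b ^ 2 - f a ^ 2) / (b - a) * x)]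
        rw [intervalIntegral.integral_const, intervalIntegral.integral_const_mul,
          integral_id]
        rw [smul_eq_mul]
        field_simp
        ring

/-- Inequality (11): the product of the Hadamard right-hand bounds for `u²` and `v²`. -/
theorem product_of_hadamard_bounds (a b : ℝ) (hab : a < b) (u v : ℝ → ℝ)
    (hu0 : ∀ x ∈ Set.Icc a b, 0 ≤ u x) (hv0 : ∀ x ∈ Set.Icc a b, 0 ≤ v x)
    (hu : ConvexOn ℝ (Set.Icc a b) u) (hv : ConvexOn ℝ (Set.Icc a b) v)
    (hu2int : IntervalIntegrable (fun x => u x ^ 2) MeasureTheory.volume a b)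
    (hv2int : IntervalIntegrable (fun x => v x ^ 2) MeasureTheory.volume a b) :
    (1 / (b - a) ^ 2) * (∫ x in a..b, u x ^ 2) * (∫ x in a..b, v x ^ 2) ≤
      ((u a ^ 2 + u b ^ 2) / 2) * ((v a ^ 2 + v b ^ 2) / 2) := by
  have hba : (0:ℝ) < b - a := by linarith
  have hA := hadamard_sq a b hab u hu0 hu hu2int
  have hB := hadamard_sq a b hab v hv0 hv hv2int
  have hA0 : 0 ≤ ∫ x in a..b, u x ^ 2 :=
    intervalIntegral.integral_nonneg hab.le (fun x _ => sq_nonneg _)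
  have hB0 : 0 ≤ ∫ x in a..b, v x ^ 2 :=
    intervalIntegral.integral_nonneg hab.le (fun x _ => sq_nonneg _)
  have hprod : (∫ x in a..b, u x ^ 2) * (∫ x in a..b, v x ^ 2)
      ≤ ((b - a) * ((u a ^ 2 + u b ^ 2) / 2)) * ((b - a) * ((v a ^ 2 + v b ^ 2) / 2)) :=
    mul_le_mul hA hB hB0 (by positivity)
  rw [div_mul_eq_mul_div, div_mul_eq_mul_div, one_mul, div_le_iff₀ (by positivity)]
  nlinarith [hprod]
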